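/- Let (X, ρ) be a compact metric space containing points x, y with ρ(x, y) = 1. Define μ₁, μ₂ : C(X) → ℝ by μ₁(φ) = max(φ(x), φ(y) - 2) and μ₂(φ) = max(φ(x), φ(y) - 4). Then μ₁ and μ₂ are idempotent probability measures on X, μ₁ ≠ μ₂, and d_I(μ₁, μ₂) = 0. In particular, d_I is not a metric. -/

import Mathlib

noncomputable section

/-- An idempotent probability measure on a topological space `X`:
a functional `μ : C(X, ℝ) → ℝ` which sends constants to their values,
is `max`-`plus` homogeneous, and turns pointwise maxima into maxima. -/
def IsIPM {X : Type*} [TopologicalSpace X] (μ : C(X, ℝ) → ℝ) : Prop :=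
  (∀ c : ℝ, μ (ContinuousMap.const X c) = c) ∧
  (∀ (c : ℝ) (φ : C(X, ℝ)), μ (ContinuousMap.const X c + φ) = c + μ φ) ∧
  (∀ φ ψ : C(X, ℝ), μ (φ ⊔ ψ) = max (μ φ) (μ ψ))

/-- `ξ` is a `(μ₁, μ₂)`-admissible idempotent probability measure on `X × X`. -/
def IsAdmissible {X : Type*} [TopologicalSpace X]
    (μ₁ μ₂ : C(X, ℝ) → ℝ) (ξ : C(X × X, ℝ) → ℝ) : Prop :=
  IsIPM ξ ∧
  (∀ φ : C(X, ℝ), ξ (φ.comp ⟨Prod.fst, continuous_fst⟩) = μ₁ φ) ∧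
  (∀ φ : C(X, ℝ), ξ (φ.comp ⟨Prod.snd, continuous_snd⟩) = μ₂ φ)

/-- The density of an idempotent probability measure. -/
def idemDensity {Z : Type*} [TopologicalSpace Z] (μ : C(Z, ℝ) → ℝ) (z : Z) : EReal :=
  sInf {r : EReal | ∃ φ : C(Z, ℝ), φ ≤ 0 ∧ φ z = 0 ∧ r = (μ φ : EReal)}

/-- The support of an idempotent probability measure. -/
def idemSupp {Z : Type*} [TopologicalSpace Z] (μ : C(Z, ℝ) → ℝ) : Set Z :=
  {z | ⊥ < idemDensity μ z}

/-- The metric `ρ` of a metric space `X`, as a continuous function on `X × X`. -/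
def rhoFun (X : Type*) [MetricSpace X] : C(X × X, ℝ) :=
  ⟨fun p => dist p.1 p.2, continuous_dist⟩

/-- The Uspenskii-type distance function `d_I` on idempotent probability measures. -/
def dI {X : Type*} [MetricSpace X] (μ₁ μ₂ : C(X, ℝ) → ℝ) : ℝ :=
  sInf {r : ℝ | ∃ ξ : C(X × X, ℝ) → ℝ, IsAdmissible μ₁ μ₂ ξ ∧ r = ξ (rhoFun X)}

/-- The distance function `ρ_I` on idempotent probability measures. -/
def rhoI {X : Type*} [MetricSpace X] (μ₁ μ₂ : C(X, ℝ) → ℝ) : ℝ :=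
  sInf {r : ℝ | ∃ ξ : C(X × X, ℝ) → ℝ, IsAdmissible μ₁ μ₂ ξ ∧
    r = sSup {s : ℝ | ∃ p ∈ idemSupp ξ, s = max (ξ (rhoFun X)) (dist p.1 p.2)}}

set_option maxHeartbeats 1600000 in
theorem stmt9 {X : Type*} [MetricSpace X] [CompactSpace X]
    (x y : X) (hxy : dist x y = 1)
    (μ₁ μ₂ : C(X, ℝ) → ℝ)
    (hμ₁ : ∀ φ : C(X, ℝ), μ₁ φ = max (φ x) (φ y - 2))
    (hμ₂ : ∀ φ : C(X, ℝ), μ₂ φ = max (φ x) (φ y - 4)) :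
    IsIPM μ₁ ∧ IsIPM μ₂ ∧ μ₁ ≠ μ₂ ∧ dI μ₁ μ₂ = 0 ∧
    ¬ (∀ ν₁ ν₂ : C(X, ℝ) → ℝ, IsIPM ν₁ → IsIPM ν₂ → dI ν₁ ν₂ = 0 → ν₁ = ν₂) := by

  -- auxiliary facts
  have hipm1 : IsIPM μ₁ := by
    refine ⟨?_, ?_, ?_⟩
    · intro c
      rw [hμ₁]
      simp only [ContinuousMap.const_apply]
      exact max_eq_left (by linarith)
    · intro c φ
      rw [hμ₁, hμ₁]
      simp only [ContinuousMap.add_apply, ContinuousMap.const_apply]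
      simp only [max_def]; split_ifs <;> linarith
    · intro φ ψ
      rw [hμ₁, hμ₁, hμ₁]
      simp only [ContinuousMap.sup_apply]
      simp only [max_def]; split_ifs <;> linarith
  have hipm2 : IsIPM μ₂ := by
    refine ⟨?_, ?_, ?_⟩
    · intro c
      rw [hμ₂]
      simp only [ContinuousMap.const_apply]
      exact max_eq_left (by linarith)
    · intro c φ
      rw [hμ₂, hμ₂]
      simp only [ContinuousMap.add_apply, ContinuousMap.const_apply]
      simp only [max_def]; split_ifs <;> linarith
    · intro φ ψ
      rw [hμ₂, hμ₂, hμ₂]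
      simp only [ContinuousMap.sup_apply]
      simp only [max_def]; split_ifs <;> linarith
  have hne : μ₁ ≠ μ₂ := by
    intro h
    set φ : C(X, ℝ) := ⟨fun p => 3 * dist x p, continuous_const.mul (continuous_const.dist continuous_id)⟩ with hφ
    have h1 : μ₁ φ = μ₂ φ := by rw [h]
    rw [hμ₁, hμ₂] at h1
    have hx : φ x = 0 := by simp [hφ]
    have hy : φ y = 3 := by
      simp only [hφ, ContinuousMap.coe_mk]
      rw [hxy]; norm_num
    rw [hx, hy] at h1
    norm_num at h1
  -- the coupling
  set ξ : C(X × X, ℝ) → ℝ := fun Φ => max (Φ (x, x)) (max (Φ (y, y) - 4) (Φ (y, x) - 2)) with hξ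
  have hadm : IsAdmissible μ₁ μ₂ ξ := by
    refine ⟨⟨?_, ?_, ?_⟩, ?_, ?_⟩
    · intro c
      simp only [hξ, ContinuousMap.const_apply]
      simp only [max_def]; split_ifs <;> linarith
    · intro c Φ
      simp only [hξ, ContinuousMap.add_apply, ContinuousMap.const_apply]
      simp only [max_def]; split_ifs <;> linarith
    · intro Φ Ψ
      simp only [hξ, ContinuousMap.sup_apply]
      simp only [max_def]; split_ifs <;> linarith
    · intro φ
      rw [hμ₁]
      simp only [hξ, ContinuousMap.comp_apply, ContinuousMap.coe_mk]
      simp only [max_def]; split_ifs <;> linarith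
    · intro φ
      rw [hμ₂]
      simp only [hξ, ContinuousMap.comp_apply, ContinuousMap.coe_mk]
      simp only [max_def]; split_ifs <;> linarith
  have hξρ : ξ (rhoFun X) = 0 := by
    simp only [hξ, rhoFun, ContinuousMap.coe_mk]
    rw [dist_self, dist_self, dist_comm y x, hxy]
    norm_num
  have hmem : (0 : ℝ) ∈ {r : ℝ | ∃ ζ : C(X × X, ℝ) → ℝ, IsAdmissible μ₁ μ₂ ζ ∧ r = ζ (rhoFun X)} :=
    ⟨ξ, hadm, hξρ.symm⟩
  have hlb : ∀ r ∈ {r : ℝ | ∃ ζ : C(X × X, ℝ) → ℝ, IsAdmissible μ₁ μ₂ ζ ∧ r = ζ (rhoFun X)},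
      (0 : ℝ) ≤ r := by
    rintro r ⟨ζ, ⟨⟨hc, _, hmax⟩, _, _⟩, rfl⟩
    have h0 : ζ (ContinuousMap.const (X × X) 0) = 0 := hc 0
    have hle : ContinuousMap.const (X × X) 0 ⊔ rhoFun X = rhoFun X := by
      ext p
      simp only [ContinuousMap.sup_apply, ContinuousMap.const_apply, rhoFun,
        ContinuousMap.coe_mk]
      exact max_eq_right dist_nonneg
    have := hmax (ContinuousMap.const (X × X) 0) (rhoFun X)
    rw [hle, h0] at this
    rw [this]
    exact le_max_left _ _
  have hd : dI μ₁ μ₂ = 0 := by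
    refine le_antisymm (csInf_le ⟨0, hlb⟩ hmem) (le_csInf ⟨0, hmem⟩ hlb)
  exact ⟨hipm1, hipm2, hne, hd, fun h => hne (h μ₁ μ₂ hipm1 hipm2 hd)⟩
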